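/- (Admissibility of the rate allocation.) In the network with capacities C = Kϱ (heavy traffic), δ = min_j ϱ_j / (2J), suppose the rate vector y ∈ ℝ^J satisfies: y_j ∈ [ϱ_j − δ, ϱ_j + δ] for all j ∉ S¹; for each resource i, either (a) y_{ǰ(i)} = C_i − ∑_{l ≠ ǰ(i): K_{il}=1} y_l, or (b) y_{ǰ(i)} = ϱ_{ǰ(i)} − δ and y_l < ϱ_l for every l with K_{il} = 1. Then y_j ≥ 0 for all j and (Ky)_i ≤ C_i for all i. -/

import Mathlib

open scoped Classical

/-- Admissibility of the rate allocation: the rate vector `y` is nonnegative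
and satisfies the capacity constraint `K y ≤ C`. -/
theorem stmt_19 (I J : ℕ) (K : Matrix (Fin I) (Fin J) ℝ)
    (hK01 : ∀ i j, K i j = 0 ∨ K i j = 1)
    (hKcols : ∀ j j' : Fin J, (∀ i, K i j = K i j') → j = j')
    (ϱ : Fin J → ℝ) (hϱ : ∀ j, 0 < ϱ j)
    (Cap : Fin I → ℝ) (hCap : ∀ i, Cap i = ∑ j, K i j * ϱ j)
    (δ : ℝ) (hδ : δ = sInf (Set.range ϱ) / (2 * J))
    (jch : Fin I → Fin J)
    (hjch : ∀ i i' : Fin I, K i' (jch i) = if i' = i then 1 else 0)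
    (y : Fin J → ℝ)
    (hy1 : ∀ j : Fin J, (∑ i, K i j) ≠ 1 → ϱ j - δ ≤ y j ∧ y j ≤ ϱ j + δ)
    (hy2 : ∀ i : Fin I,
      y (jch i) = Cap i -
          ∑ l ∈ Finset.univ.filter (fun l : Fin J => l ≠ jch i ∧ K i l = 1), y l
      ∨ (y (jch i) = ϱ (jch i) - δ ∧ ∀ l : Fin J, K i l = 1 → y l < ϱ l)) :
    (∀ j, 0 ≤ y j) ∧ ∀ i, (K.mulVec y) i ≤ Cap i := by
  have hδ0 : 0 ≤ δ := by
    rw [hδ]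
    apply div_nonneg
    · exact Real.sInf_nonneg (by rintro x ⟨j, rfl⟩; exact (hϱ j).le)
    · positivity
  have hbdd : BddBelow (Set.range ϱ) := ⟨0, by rintro x ⟨k, rfl⟩; exact (hϱ k).le⟩
  have hJδ : ∀ j : Fin J, (J : ℝ) * δ ≤ ϱ j / 2 := by
    intro j
    have hJ : (0:ℝ) < J := by exact_mod_cast j.pos
    have h1 : sInf (Set.range ϱ) ≤ ϱ j := csInf_le hbdd ⟨j, rfl⟩
    have h2 : (J:ℝ) * (sInf (Set.range ϱ) / (2 * J)) = sInf (Set.range ϱ) / 2 := by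
      field_simp
    rw [hδ, h2]
    linarith
  have hδhalf : ∀ j : Fin J, δ ≤ ϱ j / 2 := by
    intro j
    have hJ1 : (1:ℝ) ≤ J := by exact_mod_cast j.pos
    have := hJδ j
    nlinarith
  -- single-resource columns are the jch columns
  have hcol : ∀ (i : Fin I) (l : Fin J), K i l = 1 → (∑ i', K i' l) = 1 → l = jch i := by
    intro i l hil hsum
    have hnn : ∀ i'' ∈ Finset.univ.erase i, 0 ≤ K i'' l := by
      intro i'' _; rcases hK01 i'' l with h | h <;> simp [h]
    have h0 : ∑ i' ∈ Finset.univ.erase i, K i' l = 0 := by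
      have hadd := Finset.add_sum_erase Finset.univ (fun i' => K i' l) (Finset.mem_univ i)
      linarith [hadd.symm ▸ hsum]
    have hz : ∀ i' ∈ Finset.univ.erase i, K i' l = 0 :=
      (Finset.sum_eq_zero_iff_of_nonneg hnn).mp h0
    apply hKcols l (jch i)
    intro i'
    rw [hjch i i']
    by_cases h : i' = i
    · subst h; simpa using hil
    · simpa [h] using hz i' (Finset.mem_erase.mpr ⟨h, Finset.mem_univ i'⟩)
  have hy1' : ∀ (i : Fin I) (l : Fin J), K i l = 1 → l ≠ jch i →
      ϱ l - δ ≤ y l ∧ y l ≤ ϱ l + δ := by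
    intro i l hil hne
    exact hy1 l (fun hsum => hne (hcol i l hil hsum))
  -- splitting sums over a row
  have hsplit : ∀ (i : Fin I) (f : Fin J → ℝ),
      ∑ j, K i j * f j
        = f (jch i) + ∑ l ∈ Finset.univ.filter (fun l : Fin J => l ≠ jch i ∧ K i l = 1), f l := by
    intro i f
    have h1 : ∑ j, K i j * f j = ∑ l ∈ Finset.univ.filter (fun l : Fin J => K i l = 1), f l := by
      rw [Finset.sum_filter]
      apply Finset.sum_congr rfl
      intro j _
      rcases hK01 i j with h | h <;> simp [h]
    have hmem : jch i ∈ Finset.univ.filter (fun l : Fin J => K i l = 1) := by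
      simp [hjch i i]
    rw [h1, ← Finset.add_sum_erase _ _ hmem]
    congr 1
    refine Finset.sum_congr ?_ (fun _ _ => rfl)
    apply Finset.ext
    intro l
    simp only [Finset.mem_erase, Finset.mem_filter, Finset.mem_univ, true_and]
  have hCapSplit : ∀ i, Cap i
      = ϱ (jch i) + ∑ l ∈ Finset.univ.filter (fun l : Fin J => l ≠ jch i ∧ K i l = 1), ϱ l := by
    intro i; rw [hCap i]; exact hsplit i ϱ
  -- nonnegativity at jch i
  have hjnn : ∀ i, 0 ≤ y (jch i) := by
    intro i
    rcases hy2 i with ha | ⟨hb, _⟩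
    · set S := Finset.univ.filter (fun l : Fin J => l ≠ jch i ∧ K i l = 1) with hS
      have hcard : (S.card : ℝ) ≤ J := by
        exact_mod_cast (Finset.card_le_univ S).trans_eq (by simp)
      have hsum : ∑ l ∈ S, y l ≤ ∑ l ∈ S, ϱ l + S.card * δ := by
        have h1 : ∑ l ∈ S, y l ≤ ∑ l ∈ S, (ϱ l + δ) := by
          apply Finset.sum_le_sum
          intro l hl
          rw [hS, Finset.mem_filter] at hl
          exact (hy1' i l hl.2.2 hl.2.1).2
        have h2 : ∑ l ∈ S, (ϱ l + δ) = ∑ l ∈ S, ϱ l + S.card * δ := by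
          rw [Finset.sum_add_distrib, Finset.sum_const, nsmul_eq_mul]
        linarith
      have hcd : (S.card : ℝ) * δ ≤ (J:ℝ) * δ := mul_le_mul_of_nonneg_right hcard hδ0
      have hle : ϱ (jch i) - (J:ℝ) * δ ≤ y (jch i) := by
        rw [ha, hCapSplit i]
        linarith
      have := hJδ (jch i)
      have := hϱ (jch i)
      linarith
    · rw [hb]
      have := hδhalf (jch i)
      have := hϱ (jch i)
      linarith
  constructor
  · intro j
    by_cases h : (∑ i, K i j) = 1
    · have hex : ∃ i, K i j ≠ 0 := by
        by_contra hc
        push_neg at hc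
        simp [hc] at h
      obtain ⟨i, hi⟩ := hex
      have hi1 : K i j = 1 := (hK01 i j).resolve_left hi
      rw [hcol i j hi1 h]
      exact hjnn i
    · obtain ⟨h1, _⟩ := hy1 j h
      have := hδhalf j
      have := hϱ j
      linarith
  · intro i
    have hmv : K.mulVec y i
        = y (jch i) + ∑ l ∈ Finset.univ.filter (fun l : Fin J => l ≠ jch i ∧ K i l = 1), y l := by
      simp only [Matrix.mulVec, dotProduct]
      exact hsplit i y
    rcases hy2 i with ha | ⟨hb, hlt⟩
    · rw [hmv, ha]; linarith
    · have h1 : y (jch i) < ϱ (jch i) := hlt _ (by rw [hjch i i]; simp)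
      have h2 : ∑ l ∈ Finset.univ.filter (fun l : Fin J => l ≠ jch i ∧ K i l = 1), y l
          ≤ ∑ l ∈ Finset.univ.filter (fun l : Fin J => l ≠ jch i ∧ K i l = 1), ϱ l := by
        apply Finset.sum_le_sum
        intro l hl
        rw [Finset.mem_filter] at hl
        exact (hlt l hl.2.2).le
      rw [hmv, hCapSplit i]
      linarith
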